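/- For any random variable X taking values in [0, A] and Y = X + Z with Z standard Gaussian independent of X, ∫₀^A f_Y(y)·y dy ≤ E[X] + (1/√(2π))(1 − e^{−A²/2}), where f_Y is the density of Y. -/

import Mathlib

open MeasureTheory

lemma deriv_gauss (x y : ℝ) :
    HasDerivAt (fun y => -Real.exp (-(y - x) ^ 2 / 2))
      (Real.exp (-(y - x) ^ 2 / 2) * (y - x)) y := by
  have h1 : HasDerivAt (fun y : ℝ => y - x) 1 y := (hasDerivAt_id y).sub_const x
  have h2 : HasDerivAt (fun y : ℝ => -(y - x) ^ 2 / 2) (-(y - x)) y := by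
    have := ((h1.pow 2).neg).div_const 2
    exact this.congr_deriv (by norm_num; ring)
  have h3 := (h2.exp).neg
  exact h3.congr_deriv (by ring)

lemma gauss_anti (x a b : ℝ) :
    ∫ y in a..b, Real.exp (-(y - x) ^ 2 / 2) * (y - x) =
      Real.exp (-(a - x) ^ 2 / 2) - Real.exp (-(b - x) ^ 2 / 2) := by
  have h := intervalIntegral.integral_eq_sub_of_hasDerivAt
    (f := fun y => -Real.exp (-(y - x) ^ 2 / 2))
    (f' := fun y => Real.exp (-(y - x) ^ 2 / 2) * (y - x))
    (fun y _ => deriv_gauss x y)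
    (Continuous.intervalIntegrable (by continuity) a b)
  rw [h]; ring

lemma gauss_pdf_eq (x : ℝ) :
    ProbabilityTheory.gaussianPDFReal x 1 =
      fun y => (1 / Real.sqrt (2 * Real.pi)) * Real.exp (-(y - x) ^ 2 / 2) := by
  funext y
  simp [ProbabilityTheory.gaussianPDFReal, one_div]

lemma ptwise (A : ℝ) (hA : 0 < A) (x : ℝ) (hx : x ∈ Set.Icc 0 A) :
    ∫ y in (0:ℝ)..A, (1 / Real.sqrt (2 * Real.pi)) * Real.exp (-(y - x) ^ 2 / 2) * y ≤
      x + (1 / Real.sqrt (2 * Real.pi)) * (1 - Real.exp (-A ^ 2 / 2)) := by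
  set c : ℝ := 1 / Real.sqrt (2 * Real.pi) with hc
  have hsq : (0:ℝ) < Real.sqrt (2 * Real.pi) := Real.sqrt_pos.mpr (by positivity)
  have hcpos : 0 < c := by rw [hc]; positivity
  have hsplit : (fun y => c * Real.exp (-(y - x) ^ 2 / 2) * y) =
      fun y => c * (Real.exp (-(y - x) ^ 2 / 2) * (y - x)) +
        x * (c * Real.exp (-(y - x) ^ 2 / 2)) := by
    funext y; ring
  rw [hsplit]
  have hi1 : IntervalIntegrable
      (fun y => c * (Real.exp (-(y - x) ^ 2 / 2) * (y - x))) MeasureTheory.volume 0 A :=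
    Continuous.intervalIntegrable (by continuity) 0 A
  have hi2 : IntervalIntegrable
      (fun y => x * (c * Real.exp (-(y - x) ^ 2 / 2))) MeasureTheory.volume 0 A :=
    Continuous.intervalIntegrable (by continuity) 0 A
  rw [intervalIntegral.integral_add hi1 hi2, intervalIntegral.integral_const_mul,
    intervalIntegral.integral_const_mul, intervalIntegral.integral_const_mul, gauss_anti]
  have h1 : Real.exp (-(0 - x) ^ 2 / 2) - Real.exp (-(A - x) ^ 2 / 2) ≤
      1 - Real.exp (-A ^ 2 / 2) := by
    have e1 : Real.exp (-(0 - x) ^ 2 / 2) ≤ 1 := by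
      rw [Real.exp_le_one_iff]; nlinarith [sq_nonneg x]
    have e2 : Real.exp (-A ^ 2 / 2) ≤ Real.exp (-(A - x) ^ 2 / 2) := by
      apply Real.exp_le_exp.mpr
      nlinarith [hx.1, hx.2, sq_nonneg x]
    linarith
  have h2 : c * ∫ y in (0:ℝ)..A, Real.exp (-(y - x) ^ 2 / 2) ≤ 1 := by
    rw [← intervalIntegral.integral_const_mul, intervalIntegral.integral_of_le hA.le]
    calc ∫ y in Set.Ioc (0:ℝ) A, c * Real.exp (-(y - x) ^ 2 / 2) ≤
        ∫ y, c * Real.exp (-(y - x) ^ 2 / 2) := by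
          apply setIntegral_le_integral
          · have := ProbabilityTheory.integrable_gaussianPDFReal x 1
            rwa [gauss_pdf_eq] at this
          · filter_upwards with y; positivity
      _ = 1 := by
          rw [← gauss_pdf_eq]
          exact ProbabilityTheory.integral_gaussianPDFReal_eq_one x one_ne_zero
  have h4 : x * (c * ∫ y in (0:ℝ)..A, Real.exp (-(y - x) ^ 2 / 2)) ≤ x :=
    calc x * (c * ∫ y in (0:ℝ)..A, Real.exp (-(y - x) ^ 2 / 2)) ≤ x * 1 :=
          mul_le_mul_of_nonneg_left h2 hx.1
      _ = x := mul_one x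
  have h5 : c * (Real.exp (-(0 - x) ^ 2 / 2) - Real.exp (-(A - x) ^ 2 / 2)) ≤
      c * (1 - Real.exp (-A ^ 2 / 2)) := mul_le_mul_of_nonneg_left h1 hcpos.le
  linarith

theorem stmt16 {Ω : Type*} [MeasurableSpace Ω] (μ : Measure Ω) [IsProbabilityMeasure μ]
    (A : ℝ) (hA : 0 < A) (X : Ω → ℝ) (hX : Measurable X)
    (hb : ∀ᵐ ω ∂μ, X ω ∈ Set.Icc 0 A) :
    (∫ y in (0:ℝ)..A,
        (∫ ω, (1 / Real.sqrt (2 * Real.pi)) * Real.exp (-(y - X ω) ^ 2 / 2) ∂μ) * y) ≤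
      (∫ ω, X ω ∂μ) + (1 / Real.sqrt (2 * Real.pi)) * (1 - Real.exp (-A ^ 2 / 2)) := by
  set c : ℝ := 1 / Real.sqrt (2 * Real.pi) with hc
  have hsq : (0:ℝ) < Real.sqrt (2 * Real.pi) := Real.sqrt_pos.mpr (by positivity)
  have hcpos : 0 < c := by rw [hc]; positivity
  set C : ℝ := c * (1 - Real.exp (-A ^ 2 / 2)) with hC
  -- rewrite inner product
  have step1 : ∀ y : ℝ, (∫ ω, c * Real.exp (-(y - X ω) ^ 2 / 2) ∂μ) * y =
      ∫ ω, c * Real.exp (-(y - X ω) ^ 2 / 2) * y ∂μ :=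
    fun y => (integral_mul_const y _).symm
  simp_rw [step1]
  rw [intervalIntegral.integral_of_le hA.le]
  -- Fubini
  have hF : Integrable (Function.uncurry fun (y : ℝ) (ω : Ω) =>
      c * Real.exp (-(y - X ω) ^ 2 / 2) * y)
      ((MeasureTheory.volume.restrict (Set.Ioc 0 A)).prod μ) := by
    apply Integrable.mono' (integrable_const (c * A))
    · apply Measurable.aestronglyMeasurable
      apply Measurable.mul
      · exact (measurable_const.mul
          (((measurable_fst.sub (hX.comp measurable_snd)).pow_const 2).neg.div_const 2).exp)
      · exact measurable_fst
    · have hy : ∀ᵐ p ∂((MeasureTheory.volume.restrict (Set.Ioc 0 A)).prod μ),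
          p.1 ∈ Set.Ioc (0:ℝ) A := by
        rw [MeasureTheory.Measure.ae_prod_iff_ae_ae]
        · filter_upwards [ae_restrict_mem measurableSet_Ioc] with y hy
          filter_upwards with ω using hy
        · exact measurable_fst measurableSet_Ioc
      filter_upwards [hy] with p hp
      have he : Real.exp (-(p.1 - X p.2) ^ 2 / 2) ≤ 1 := by
        rw [Real.exp_le_one_iff]; nlinarith [sq_nonneg (p.1 - X p.2)]
      have hepos : 0 < Real.exp (-(p.1 - X p.2) ^ 2 / 2) := Real.exp_pos _
      rw [Function.uncurry, Real.norm_eq_abs,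
        abs_of_nonneg (mul_nonneg (mul_nonneg hcpos.le hepos.le) hp.1.le)]
      calc c * Real.exp (-(p.1 - X p.2) ^ 2 / 2) * p.1 ≤ c * 1 * p.1 := by
            have hp0 : (0:ℝ) ≤ p.1 := hp.1.le
            gcongr
        _ ≤ c * A := by rw [mul_one]; exact mul_le_mul_of_nonneg_left hp.2 hcpos.le
  rw [MeasureTheory.integral_integral_swap hF]
  -- compare with X + C
  have hXint : Integrable X μ := by
    apply Integrable.mono' (integrable_const A) hX.aestronglyMeasurable
    filter_upwards [hb] with ω h
    rw [Real.norm_eq_abs, abs_of_nonneg h.1]; exact h.2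
  have key : (∫ ω, (∫ y in Set.Ioc (0:ℝ) A,
      c * Real.exp (-(y - X ω) ^ 2 / 2) * y) ∂μ) ≤ ∫ ω, (X ω + C) ∂μ := by
    apply integral_mono_of_nonneg
    · filter_upwards with ω
      apply setIntegral_nonneg measurableSet_Ioc
      intro y hy
      exact mul_nonneg (mul_nonneg hcpos.le (Real.exp_pos _).le) hy.1.le
    · exact hXint.add (integrable_const C)
    · filter_upwards [hb] with ω hω
      have := ptwise A hA (X ω) hω
      rw [intervalIntegral.integral_of_le hA.le] at this
      exact this
  calc (∫ ω, (∫ y in Set.Ioc (0:ℝ) A, c * Real.exp (-(y - X ω) ^ 2 / 2) * y) ∂μ)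
      ≤ ∫ ω, (X ω + C) ∂μ := key
    _ = (∫ ω, X ω ∂μ) + C := by
        rw [integral_add hXint (integrable_const C), integral_const, probReal_univ]
        simp
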